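/- Under the assumptions that φ is C¹, nonnegative, increasing on (0,∞), satisfies ∫₁^∞ φ(t)/t² dt < ∞, and the function t φ'(t) is nondecreasing (condition (iv-a)), the second derivative q''(y) = −(4y/π)∫₀^∞ tφ'(t)/(t²+y²)² dt satisfies |q''(y)| ≥ φ'(y)/(3π y) for all y > 0. -/

import Mathlib

open Set Filter MeasureTheory

lemma phip_nonneg (φ φ' : ℝ → ℝ)
    (hderiv : ∀ t ∈ Ioi (0:ℝ), HasDerivAt φ (φ' t) t)
    (hmono : MonotoneOn φ (Ioi 0)) :
    ∀ y ∈ Ioi (0:ℝ), 0 ≤ φ' y := by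
  intro y hy
  have h := (hasDerivAt_iff_tendsto_slope.mp (hderiv y hy)).mono_left
    (nhdsWithin_mono y (fun z hz => ne_of_gt hz : Ioi y ⊆ {y}ᶜ))
  refine ge_of_tendsto h ?_
  filter_upwards [self_mem_nhdsWithin] with z hz
  have hz0 : z ∈ Ioi (0:ℝ) := mem_Ioi.mpr (lt_trans (mem_Ioi.mp hy) (mem_Ioi.mp hz))
  have : φ y ≤ φ z := hmono hy hz0 (le_of_lt hz)
  have hzy : 0 < z - y := by simp [sub_pos]; exact hz
  rw [slope_def_field]
  exact div_nonneg (by linarith) hzy.le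

theorem stmt5 (φ φ' : ℝ → ℝ)
    (hderiv : ∀ t ∈ Ioi (0:ℝ), HasDerivAt φ (φ' t) t)
    (hcont : ContinuousOn φ' (Ioi 0))
    (hnonneg : ∀ t ∈ Ioi (0:ℝ), 0 ≤ φ t)
    (hmono : MonotoneOn φ (Ioi 0))
    (hint : IntegrableOn (fun t => φ t / t ^ 2) (Ioi 1))
    (hiva : MonotoneOn (fun t => t * φ' t) (Ioi 0))
    (hint' : ∀ y > (0:ℝ), IntegrableOn (fun t => t * φ' t / (t ^ 2 + y ^ 2) ^ 2) (Ioi 0)) :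
    ∀ y > (0:ℝ),
      |-(4 * y / Real.pi) * ∫ t in Ioi (0:ℝ), t * φ' t / (t ^ 2 + y ^ 2) ^ 2|
        ≥ φ' y / (3 * Real.pi * y) := by
  intro y hy
  have hπ : (0:ℝ) < Real.pi := Real.pi_pos
  have hφ' : ∀ t ∈ Ioi (0:ℝ), 0 ≤ φ' t := phip_nonneg φ φ' hderiv hmono
  have hφ'y : 0 ≤ φ' y := hφ' y hy
  set F : ℝ → ℝ := fun t => t * φ' t / (t ^ 2 + y ^ 2) ^ 2 with hF
  have hFnonneg : ∀ t ∈ Ioi (0:ℝ), 0 ≤ F t := by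
    intro t ht
    exact div_nonneg (mul_nonneg (le_of_lt ht) (hφ' t ht)) (by positivity)
  -- lower bound function on Ioi y
  set G : ℝ → ℝ := fun t => (y * φ' y / 4) * t ^ (-4 : ℝ) with hG
  have hGint : IntegrableOn G (Ioi y) :=
    (integrableOn_Ioi_rpow_of_lt (by norm_num) hy).const_mul _
  have hGF : ∀ t ∈ Ioi y, G t ≤ F t := by
    intro t ht
    have hty : y < t := ht
    have ht0 : (0:ℝ) < t := lt_trans hy hty
    have h1 : y * φ' y ≤ t * φ' t := hiva hy (by exact ht0) hty.le
    have hy2 : y ^ 2 ≤ t ^ 2 := by nlinarith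
    have h2 : (t ^ 2 + y ^ 2) ^ 2 ≤ 4 * t ^ 4 := by
      nlinarith [mul_nonneg (sub_nonneg.mpr hy2) (by positivity : (0:ℝ) ≤ 3 * t ^ 2 + y ^ 2)]
    have h4 : t ^ (-4:ℝ) = 1 / t ^ 4 := by
      rw [Real.rpow_neg ht0.le, one_div]
      norm_cast
    rw [hG, hF]
    simp only [h4, mul_one_div]
    rw [div_le_div_iff₀ (by positivity) (by positivity)]
    calc y * φ' y / 4 * (t ^ 2 + y ^ 2) ^ 2 ≤ y * φ' y / 4 * (4 * t ^ 4) := by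
          apply mul_le_mul_of_nonneg_left h2
          have : 0 ≤ y * φ' y := mul_nonneg hy.le hφ'y
          linarith
      _ = y * φ' y * t ^ 4 := by ring
      _ ≤ t * φ' t * t ^ 4 := by nlinarith [pow_pos ht0 4]
  have hFint : IntegrableOn F (Ioi 0) := hint' y hy
  have hFintY : IntegrableOn F (Ioi y) := hFint.mono_set (Ioi_subset_Ioi hy.le)
  -- ∫_{Ioi y} G
  have hGval : ∫ t in Ioi y, G t = φ' y / (12 * y ^ 2) := by
    rw [hG, MeasureTheory.integral_const_mul, integral_Ioi_rpow_of_lt (by norm_num) hy]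
    have : y ^ ((-4:ℝ) + 1) = 1 / y ^ 3 := by
      rw [show (-4:ℝ) + 1 = -3 by norm_num, Real.rpow_neg hy.le, one_div]
      norm_cast
    rw [this]
    field_simp
    ring
  have step1 : ∫ t in Ioi y, G t ≤ ∫ t in Ioi y, F t :=
    setIntegral_mono_on hGint hFintY measurableSet_Ioi hGF
  have step2 : ∫ t in Ioi y, F t ≤ ∫ t in Ioi (0:ℝ), F t := by
    apply setIntegral_mono_set hFint
    · filter_upwards [ae_restrict_mem measurableSet_Ioi] with t ht
      exact hFnonneg t ht
    · exact HasSubset.Subset.eventuallyLE (Ioi_subset_Ioi hy.le)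
  have hIlb : φ' y / (12 * y ^ 2) ≤ ∫ t in Ioi (0:ℝ), F t := by
    rw [← hGval]; exact le_trans step1 step2
  have hInn : 0 ≤ ∫ t in Ioi (0:ℝ), F t := le_trans (by positivity) hIlb
  have habs : |-(4 * y / Real.pi) * ∫ t in Ioi (0:ℝ), F t| = (4 * y / Real.pi) * ∫ t in Ioi (0:ℝ), F t := by
    rw [abs_mul, abs_neg, abs_of_nonneg (by positivity), abs_of_nonneg hInn]
  rw [ge_iff_le, habs]
  calc φ' y / (3 * Real.pi * y) = (4 * y / Real.pi) * (φ' y / (12 * y ^ 2)) := by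
        field_simp; ring
    _ ≤ (4 * y / Real.pi) * ∫ t in Ioi (0:ℝ), F t := by
        apply mul_le_mul_of_nonneg_left hIlb (by positivity)
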